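/- Let Ã, A, P be invertible 2×2 complex matrices, c ∈ ℂ with |c| = 1, and let E be a 2×2 complex matrix such that c·P*AP = Ã + E and ‖E‖ ≤ |det Ã|/(8‖Ã‖+4). Then | |det P| − (|det Ã|/|det A|)^{1/2} | ≤ ‖E‖·(4‖Ã‖+2)/√(|det Ã|·|det A|). -/

import Mathlib

open Matrix

/-- The entrywise maximum norm `‖X‖ = max_{j,k} |x_{jk}|` on complex matrices. -/
noncomputable def maxNorm {n : ℕ} (X : Matrix (Fin n) (Fin n) ℂ) : ℝ :=
  ((Finset.univ.sup fun p : Fin n × Fin n => ‖X p.1 p.2‖₊ : NNReal) : ℝ)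

lemma maxNorm_nonneg' {n : ℕ} (X : Matrix (Fin n) (Fin n) ℂ) : 0 ≤ maxNorm X :=
  NNReal.coe_nonneg _

lemma entry_le_maxNorm {n : ℕ} (X : Matrix (Fin n) (Fin n) ℂ) (i j : Fin n) :
    ‖X i j‖ ≤ maxNorm X := by
  have h := Finset.le_sup (f := fun p : Fin n × Fin n => ‖X p.1 p.2‖₊) (Finset.mem_univ (i, j))
  simp only [Prod.fst, Prod.snd] at h
  unfold maxNorm
  rw [← coe_nnnorm]
  exact NNReal.coe_le_coe.mpr h

set_option maxHeartbeats 1000000 in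
/-- Let `Ã, A, P` be invertible `2×2` complex matrices, `|c| = 1`,
`c·P*AP = Ã + E` and `‖E‖ ≤ |det Ã|/(8‖Ã‖+4)`. Then
`| |det P| − (|det Ã|/|det A|)^{1/2} | ≤ ‖E‖·(4‖Ã‖+2)/√(|det Ã|·|det A|)`. -/
theorem det_modulus_estimate_of_perturbed_conjugation
    (A A' P E : Matrix (Fin 2) (Fin 2) ℂ) (c : ℂ)
    (hA : IsUnit A) (hA' : IsUnit A') (hP : IsUnit P) (hc : ‖c‖ = 1)
    (heq : c • (Pᴴ * A * P) = A' + E)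
    (hE : maxNorm E ≤ ‖A'.det‖ / (8 * maxNorm A' + 4)) :
    |‖P.det‖ - Real.sqrt (‖A'.det‖ / ‖A.det‖)| ≤
      maxNorm E * (4 * maxNorm A' + 2) / Real.sqrt (‖A'.det‖ * ‖A.det‖) := by
  set t := maxNorm A' with ht
  set e := maxNorm E with he
  set D := ‖A'.det‖ with hD
  set d := ‖A.det‖ with hd
  set x := ‖P.det‖ with hx
  have ht0 : 0 ≤ t := maxNorm_nonneg' A'
  have he0 : 0 ≤ e := maxNorm_nonneg' E
  have hx0 : 0 ≤ x := norm_nonneg _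
  have hD0 : 0 < D := by
    have h := (Matrix.isUnit_iff_isUnit_det A').mp hA'
    exact norm_pos_iff.mpr h.ne_zero
  have hd0 : 0 < d := by
    have h := (Matrix.isUnit_iff_isUnit_det A).mp hA
    exact norm_pos_iff.mpr h.ne_zero
  have hA'e : ∀ i j, ‖A' i j‖ ≤ t := fun i j => entry_le_maxNorm A' i j
  have hEe : ∀ i j, ‖E i j‖ ≤ e := fun i j => entry_le_maxNorm E i j
  -- D ≤ 2 t²
  have hD2t : D ≤ 2 * t ^ 2 := by
    have hdet2 : A'.det = A' 0 0 * A' 1 1 - A' 0 1 * A' 1 0 := Matrix.det_fin_two A'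
    calc D = ‖A' 0 0 * A' 1 1 - A' 0 1 * A' 1 0‖ := by rw [hD, hdet2]
    _ ≤ ‖A' 0 0 * A' 1 1‖ + ‖A' 0 1 * A' 1 0‖ := norm_sub_le _ _
    _ = ‖A' 0 0‖ * ‖A' 1 1‖ + ‖A' 0 1‖ * ‖A' 1 0‖ := by rw [norm_mul, norm_mul]
    _ ≤ t * t + t * t :=
        add_le_add (mul_le_mul (hA'e 0 0) (hA'e 1 1) (norm_nonneg _) ht0)
          (mul_le_mul (hA'e 0 1) (hA'e 1 0) (norm_nonneg _) ht0)
    _ = 2 * t ^ 2 := by ring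
  have h84 : (0:ℝ) < 8 * t + 4 := by linarith
  have h1 : e * (8 * t + 4) ≤ D := by
    have := hE
    rwa [le_div_iff₀ h84] at this
  have hEt4 : e ≤ t / 4 := by nlinarith
  -- key identity : ‖det(A'+E)‖ = d * x ^ 2
  have hdet : ‖(A' + E).det‖ = d * x ^ 2 := by
    rw [← heq, Matrix.det_smul, Matrix.det_mul, Matrix.det_mul, Matrix.det_conjTranspose]
    simp only [Fintype.card_fin, norm_mul, norm_pow, hc, norm_star, one_pow, one_mul]
    rw [hd, hx]; ring
  -- perturbation bound
  have hΔ : ‖(A' + E).det - A'.det‖ ≤ 4 * t * e + 2 * e ^ 2 := by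
    have hexp : (A' + E).det - A'.det =
        (A' 0 0 * E 1 1 + E 0 0 * A' 1 1 + E 0 0 * E 1 1)
        - (A' 0 1 * E 1 0 + E 0 1 * A' 1 0 + E 0 1 * E 1 0) := by
      simp [Matrix.det_fin_two, Matrix.add_apply]; ring
    rw [hexp]
    have b1 : ‖A' 0 0 * E 1 1 + E 0 0 * A' 1 1 + E 0 0 * E 1 1‖ ≤ t * e + e * t + e * e := by
      calc ‖A' 0 0 * E 1 1 + E 0 0 * A' 1 1 + E 0 0 * E 1 1‖
          ≤ ‖A' 0 0 * E 1 1 + E 0 0 * A' 1 1‖ + ‖E 0 0 * E 1 1‖ := norm_add_le _ _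
      _ ≤ ‖A' 0 0 * E 1 1‖ + ‖E 0 0 * A' 1 1‖ + ‖E 0 0 * E 1 1‖ :=
          add_le_add_left (norm_add_le _ _) _
      _ = ‖A' 0 0‖ * ‖E 1 1‖ + ‖E 0 0‖ * ‖A' 1 1‖ + ‖E 0 0‖ * ‖E 1 1‖ := by
          rw [norm_mul, norm_mul, norm_mul]
      _ ≤ t * e + e * t + e * e :=
          add_le_add (add_le_add
            (mul_le_mul (hA'e 0 0) (hEe 1 1) (norm_nonneg _) ht0)
            (mul_le_mul (hEe 0 0) (hA'e 1 1) (norm_nonneg _) he0))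
            (mul_le_mul (hEe 0 0) (hEe 1 1) (norm_nonneg _) he0)
    have b2 : ‖A' 0 1 * E 1 0 + E 0 1 * A' 1 0 + E 0 1 * E 1 0‖ ≤ t * e + e * t + e * e := by
      calc ‖A' 0 1 * E 1 0 + E 0 1 * A' 1 0 + E 0 1 * E 1 0‖
          ≤ ‖A' 0 1 * E 1 0 + E 0 1 * A' 1 0‖ + ‖E 0 1 * E 1 0‖ := norm_add_le _ _
      _ ≤ ‖A' 0 1 * E 1 0‖ + ‖E 0 1 * A' 1 0‖ + ‖E 0 1 * E 1 0‖ :=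
          add_le_add_left (norm_add_le _ _) _
      _ = ‖A' 0 1‖ * ‖E 1 0‖ + ‖E 0 1‖ * ‖A' 1 0‖ + ‖E 0 1‖ * ‖E 1 0‖ := by
          rw [norm_mul, norm_mul, norm_mul]
      _ ≤ t * e + e * t + e * e :=
          add_le_add (add_le_add
            (mul_le_mul (hA'e 0 1) (hEe 1 0) (norm_nonneg _) ht0)
            (mul_le_mul (hEe 0 1) (hA'e 1 0) (norm_nonneg _) he0))
            (mul_le_mul (hEe 0 1) (hEe 1 0) (norm_nonneg _) he0)
    calc ‖(A' 0 0 * E 1 1 + E 0 0 * A' 1 1 + E 0 0 * E 1 1)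
          - (A' 0 1 * E 1 0 + E 0 1 * A' 1 0 + E 0 1 * E 1 0)‖
        ≤ ‖A' 0 0 * E 1 1 + E 0 0 * A' 1 1 + E 0 0 * E 1 1‖ +
        ‖A' 0 1 * E 1 0 + E 0 1 * A' 1 0 + E 0 1 * E 1 0‖ := norm_sub_le _ _
    _ ≤ (t * e + e * t + e * e) + (t * e + e * t + e * e) := add_le_add b1 b2
    _ = 4 * t * e + 2 * e ^ 2 := by ring
  have hK : |d * x ^ 2 - D| ≤ 4 * t * e + 2 * e ^ 2 := by
    have h := abs_norm_sub_norm_le ((A' + E).det) A'.det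
    rw [hdet] at h
    exact h.trans hΔ
  -- sqrt setup
  set u := Real.sqrt D with hu
  set v := Real.sqrt d with hv
  have hu0 : 0 < u := Real.sqrt_pos.mpr hD0
  have hv0 : 0 < v := Real.sqrt_pos.mpr hd0
  have hu2 : u ^ 2 = D := Real.sq_sqrt hD0.le
  have hv2 : v ^ 2 = d := Real.sq_sqrt hd0.le
  have hΔ916 : 4 * t * e + 2 * e ^ 2 ≤ 9 * D / 16 := by nlinarith
  have hvx : u / 2 ≤ v * x := by
    have hl : D - (4 * t * e + 2 * e ^ 2) ≤ d * x ^ 2 := by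
      have := (abs_le.mp hK).1; linarith
    have h2 : (u / 2) ^ 2 ≤ (v * x) ^ 2 := by
      have hvx2 : (v * x) ^ 2 = d * x ^ 2 := by rw [mul_pow, hv2]
      nlinarith
    calc u / 2 = Real.sqrt ((u / 2) ^ 2) := (Real.sqrt_sq (by positivity)).symm
    _ ≤ Real.sqrt ((v * x) ^ 2) := Real.sqrt_le_sqrt h2
    _ = v * x := Real.sqrt_sq (by positivity)
  have hfac : |v * x - u| * (v * x + u) ≤ 4 * t * e + 2 * e ^ 2 := by
    have habs : |v * x - u| * (v * x + u) = |(v * x) ^ 2 - u ^ 2| := by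
      rw [← abs_of_nonneg (show (0:ℝ) ≤ v * x + u by positivity), ← abs_mul]
      congr 1; ring
    rw [habs, hu2, show (v * x) ^ 2 = d * x ^ 2 from by rw [mul_pow, hv2]]
    exact hK
  have hmain : |v * x - u| ≤ (2 / 3) * (4 * t * e + 2 * e ^ 2) / u := by
    rw [le_div_iff₀ hu0]
    have h32 : |v * x - u| * ((3 / 2) * u) ≤ |v * x - u| * (v * x + u) := by
      apply mul_le_mul_of_nonneg_left _ (abs_nonneg _)
      linarith
    calc |v * x - u| * u = (2 / 3) * (|v * x - u| * ((3 / 2) * u)) := by ring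
    _ ≤ (2 / 3) * (|v * x - u| * (v * x + u)) := by linarith
    _ ≤ (2 / 3) * (4 * t * e + 2 * e ^ 2) := by linarith
  have hgoal1 : Real.sqrt (D / d) = u / v := Real.sqrt_div hD0.le d
  have hgoal2 : Real.sqrt (D * d) = u * v := Real.sqrt_mul hD0.le d
  rw [hgoal1, hgoal2]
  have hrw : |x - u / v| = |v * x - u| / v := by
    rw [show x - u / v = (v * x - u) / v from by field_simp, abs_div, abs_of_pos hv0]
  rw [hrw]
  have hfin : (2 / 3) * (4 * t * e + 2 * e ^ 2) ≤ e * (4 * t + 2) := by nlinarith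
  calc |v * x - u| / v ≤ ((2 / 3) * (4 * t * e + 2 * e ^ 2) / u) / v := by
        apply div_le_div_of_nonneg_right hmain hv0.le
  _ = (2 / 3) * (4 * t * e + 2 * e ^ 2) / (u * v) := by rw [div_div]
  _ ≤ e * (4 * t + 2) / (u * v) := by
        apply div_le_div_of_nonneg_right hfin (by positivity)
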